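/- arXiv:2303.14582 — 3 statements merged into one kernel-verified Lean document; each statement's English description precedes it below -/
import Mathlib

section
/- Let k ≥ 2 and 1 ≤ α ≤ k−1 be integers, C > 0, and let f : U → [0, C], where U is the collection of all size-α subsets of {1,…,k}. Let 𝐈 ∈ {0,1}^{|U|×k} be the matrix whose rows are the characteristic vectors 1_T for T ∈ U. Then 𝐈ᵀ𝐈 is invertible and the population least-squares coefficient vector θ* = (𝐈ᵀ𝐈)^{-1} 𝐈ᵀ f satisfies ‖θ*‖ ≤ C √k (k−1) / (k−α). -/
open Finset Matrix

/-- The Euclidean norm of a vector. -/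
noncomputable def euclNorm {ι : Type*} [Fintype ι] (v : ι → ℝ) : ℝ :=
  Real.sqrt (∑ i, v i ^ 2)

/-- The matrix `𝐈 ∈ {0,1}^{|U|×k}` whose rows are the characteristic vectors `1_T` of the
size-`α` subsets `T` of `{1,…,k}`. -/
def bigI (k α : ℕ) : Matrix {S : Finset (Fin k) // S.card = α} (Fin k) ℝ :=
  Matrix.of fun S j => if j ∈ S.1 then 1 else 0

theorem aux_count {β : Type*} [DecidableEq β] (u : Finset β) (i : β) (hi : i ∈ u)
    (n : ℕ) (p : Finset β → Prop) [DecidablePred p]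
    (hp : ∀ S, i ∉ S → (p (insert i S) ↔ p S)) :
    ((u.powersetCard (n+1)).filter (fun S => i ∈ S ∧ p S)).card
      = (((u.erase i).powersetCard n).filter p).card := by
  refine Finset.card_bij' (fun S _ => S.erase i) (fun T _ => insert i T) ?_ ?_ ?_ ?_
  · intro S hS
    simp only [mem_filter, mem_powersetCard] at hS ⊢
    obtain ⟨⟨hSu, hScard⟩, hiS, hpS⟩ := hS
    refine ⟨⟨erase_subset_erase i hSu, by rw [card_erase_of_mem hiS, hScard]; rfl⟩, ?_⟩
    have := hp (S.erase i) (notMem_erase i S)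
    rw [insert_erase hiS] at this
    exact this.mp hpS
  · intro T hT
    simp only [mem_filter, mem_powersetCard] at hT ⊢
    obtain ⟨⟨hTu, hTcard⟩, hpT⟩ := hT
    have hiT : i ∉ T := fun h => (notMem_erase i u) (hTu h)
    refine ⟨⟨insert_subset hi (hTu.trans (erase_subset i u)), by
      rw [card_insert_of_notMem hiT, hTcard]⟩, mem_insert_self i T, (hp T hiT).mpr hpT⟩
  · intro S hS
    simp only [mem_filter] at hS
    exact insert_erase hS.2.1
  · intro T hT
    simp only [mem_filter, mem_powersetCard] at hT
    exact erase_insert (fun h => (notMem_erase i u) (hT.1.1 h))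

theorem count1 {β : Type*} [DecidableEq β] (u : Finset β) (i : β) (hi : i ∈ u) (n : ℕ) :
    ((u.powersetCard (n+1)).filter (fun S => i ∈ S)).card = (u.card - 1).choose n := by
  have h := aux_count u i hi n (fun _ => True) (by simp)
  simp only [and_true, filter_true_of_mem (fun _ _ => trivial)] at h
  rw [h, Finset.card_powersetCard, card_erase_of_mem hi]

theorem count2 {β : Type*} [DecidableEq β] (u : Finset β) (i j : β) (hi : i ∈ u) (hj : j ∈ u)
    (hij : i ≠ j) (n : ℕ) :
    ((u.powersetCard (n+2)).filter (fun S => i ∈ S ∧ j ∈ S)).card = (u.card - 2).choose n := by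
  have h := aux_count u i hi (n+1) (fun S => j ∈ S)
    (fun S hS => by simp [Finset.mem_insert, hij.symm])
  rw [h, count1 (u.erase i) j (mem_erase.mpr ⟨hij.symm, hj⟩) n, card_erase_of_mem hi,
    Nat.sub_sub]

theorem sum_ite_one {ι : Type*} [Fintype ι] [DecidableEq ι] (i : ι) (a b : ℝ) :
    ∑ l, (if l = i then a else b) = a + ((Fintype.card ι : ℝ) - 1) * b := by
  have h : ∀ l : ι, (if l = i then a else b) = b + (if l = i then a - b else 0) := by
    intro l; split <;> ring
  rw [Finset.sum_congr rfl (fun l _ => h l), Finset.sum_add_distrib, Finset.sum_const,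
    Finset.sum_ite_eq' Finset.univ i (fun _ => a - b)]
  simp [Finset.card_univ]
  ring

theorem sum_ite_two {ι : Type*} [Fintype ι] [DecidableEq ι] (i j : ι) (hij : i ≠ j) (a b e : ℝ) :
    ∑ l, (if l = i then a else if l = j then b else e)
      = a + b + ((Fintype.card ι : ℝ) - 2) * e := by
  have h : ∀ l : ι, (if l = i then a else if l = j then b else e)
      = e + ((if l = i then a - e else 0) + (if l = j then b - e else 0)) := by
    intro l
    rcases eq_or_ne l i with rfl | h1
    · simp [hij]
    · rcases eq_or_ne l j with rfl | h2
      · simp [h1]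
      · simp [h1, h2]
  rw [Finset.sum_congr rfl (fun l _ => h l), Finset.sum_add_distrib, Finset.sum_const,
    Finset.sum_add_distrib, Finset.sum_ite_eq' Finset.univ i (fun _ => a - e),
    Finset.sum_ite_eq' Finset.univ j (fun _ => b - e)]
  simp [Finset.card_univ]
  ring

set_option maxHeartbeats 1600000 in
theorem stmt_8 (k α : ℕ) (hk : 2 ≤ k) (hα1 : 1 ≤ α) (hαk : α ≤ k - 1)
    (C : ℝ) (hC : 0 < C)
    (f : {S : Finset (Fin k) // S.card = α} → ℝ)
    (hf : ∀ T, f T ∈ Set.Icc (0 : ℝ) C) :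
    IsUnit ((bigI k α)ᵀ * bigI k α) ∧
    euclNorm (((bigI k α)ᵀ * bigI k α)⁻¹ *ᵥ ((bigI k α)ᵀ *ᵥ f)) ≤
      C * Real.sqrt k * ((k : ℝ) - 1) / ((k : ℝ) - (α : ℝ)) := by
  have hαk2 : α + 1 ≤ k := by omega
  have hkR : (2:ℝ) ≤ (k:ℝ) := by exact_mod_cast hk
  have hαR : (1:ℝ) ≤ (α:ℝ) := by exact_mod_cast hα1
  have hαkR : (α:ℝ) + 1 ≤ (k:ℝ) := by exact_mod_cast hαk2
  have hkα : (0:ℝ) < (k:ℝ) - α := by linarith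
  have hk1 : (0:ℝ) < (k:ℝ) - 1 := by linarith
  set d : ℝ := ((k-1).choose (α-1) : ℝ) with hd_def
  set c : ℝ := if 2 ≤ α then (((k-2).choose (α-2)) : ℝ) else 0 with hc_def
  have hd0 : (0:ℝ) < d := by
    rw [hd_def]
    exact_mod_cast Nat.choose_pos (by omega : α - 1 ≤ k - 1)
  have hc0 : (0:ℝ) ≤ c := by rw [hc_def]; split <;> positivity
  -- counting lemmas at the sum level
  have hsub : ∀ g : Finset (Fin k) → ℝ, ∑ S : {S : Finset (Fin k) // S.card = α}, g S.1 = ∑ S ∈ Finset.univ.powersetCard α, g S :=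
    fun g => (Finset.sum_subtype _ (fun S => Finset.mem_powersetCard_univ) g).symm
  have hcount : ∀ i : Fin k, ∑ S : {S : Finset (Fin k) // S.card = α}, (if i ∈ S.1 then (1:ℝ) else 0) = d := by
    intro i
    rw [hsub (fun S => if i ∈ S then (1:ℝ) else 0), Finset.sum_boole]
    rw [show α = (α - 1) + 1 by omega, count1 _ i (Finset.mem_univ i) (α-1)]
    rw [hd_def]
    norm_num [Finset.card_univ]
  have hpair : ∀ i j : Fin k, i ≠ j →
      ∑ S : {S : Finset (Fin k) // S.card = α}, (if i ∈ S.1 ∧ j ∈ S.1 then (1:ℝ) else 0) = c := by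
    intro i j hij
    rw [hsub (fun S => if i ∈ S ∧ j ∈ S then (1:ℝ) else 0), Finset.sum_boole, hc_def]
    by_cases h2 : 2 ≤ α
    · rw [if_pos h2, show α = (α - 2) + 2 by omega,
        count2 _ i j (Finset.mem_univ i) (Finset.mem_univ j) hij (α-2)]
      norm_num [Finset.card_univ]
    · rw [if_neg h2]
      have hα : α = 1 := by omega
      norm_num
      intro S hS hiS hjS
      rw [hα] at hS
      exact hij (Finset.card_le_one.mp (le_of_eq hS) i hiS j hjS)
  have hA : ∀ i j, ((bigI k α)ᵀ * bigI k α) i j = if i = j then d else c := by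
    intro i j
    rw [Matrix.mul_apply]
    simp only [Matrix.transpose_apply, bigI, Matrix.of_apply]
    have he : ∀ S : {S : Finset (Fin k) // S.card = α}, (if i ∈ S.1 then (1:ℝ) else 0) * (if j ∈ S.1 then (1:ℝ) else 0)
        = if i ∈ S.1 ∧ j ∈ S.1 then (1:ℝ) else 0 := by
      intro S; split_ifs with h1 h2 h3 <;> simp_all
    rw [Finset.sum_congr rfl (fun S _ => he S)]
    rcases eq_or_ne i j with rfl | hij
    · simp only [and_self, if_pos rfl]
      exact hcount i
    · rw [if_neg hij]
      exact hpair i j hij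
  -- row sum identity
  have hcardS : ∀ S : {S : Finset (Fin k) // S.card = α}, ∑ j : Fin k, (if j ∈ S.1 then (1:ℝ) else 0) = (α:ℝ) := by
    intro S
    rw [Finset.sum_boole]
    norm_num [Finset.filter_mem_eq_inter, S.2]
  have hswap : ∀ i : Fin k, (if i = i then d else c) = d := fun i => if_pos rfl
  have hcomm : ∀ i j : Fin k, (if i = j then d else c) = (if j = i then d else c) := by
    intro i j
    rcases eq_or_ne j i with rfl | h
    · simp
    · rw [if_neg h, if_neg (Ne.symm h)]
  have hrow : ∀ i : Fin k, ∑ j : Fin k, ((bigI k α)ᵀ * bigI k α) i j = (α:ℝ) * d := by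
    intro i
    have : ∀ j : Fin k, ((bigI k α)ᵀ * bigI k α) i j
        = ∑ S : {S : Finset (Fin k) // S.card = α}, (if i ∈ S.1 then (1:ℝ) else 0) * (if j ∈ S.1 then (1:ℝ) else 0) := by
      intro j
      rw [Matrix.mul_apply]
      simp only [Matrix.transpose_apply, bigI, Matrix.of_apply]
    rw [Finset.sum_congr rfl (fun j _ => this j), Finset.sum_comm]
    have : ∀ S : {S : Finset (Fin k) // S.card = α}, ∑ j : Fin k, (if i ∈ S.1 then (1:ℝ) else 0) * (if j ∈ S.1 then (1:ℝ) else 0)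
        = (α:ℝ) * (if i ∈ S.1 then (1:ℝ) else 0) := by
      intro S
      rw [← Finset.mul_sum, hcardS S]
      ring
    rw [Finset.sum_congr rfl (fun S _ => this S), ← Finset.mul_sum, hcount i]
  have hdc : d + ((k:ℝ) - 1) * c = (α:ℝ) * d := by
    have i0 : Fin k := ⟨0, by omega⟩
    have h1 : ∑ j : Fin k, ((bigI k α)ᵀ * bigI k α) i0 j = d + ((k:ℝ) - 1) * c := by
      rw [Finset.sum_congr rfl (fun j _ => (hA i0 j).trans (hcomm i0 j)),
        sum_ite_one i0 d c]
      norm_num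
    rw [← h1, hrow i0]
  set N : ℝ := (Fintype.card {S : Finset (Fin k) // S.card = α} : ℝ) with hN_def
  have hN0 : (0:ℝ) < N := by
    rw [hN_def]
    have : 0 < Fintype.card {S : Finset (Fin k) // S.card = α} := by
      refine Fintype.card_pos_iff.mpr ?_
      obtain ⟨T, hT⟩ := Finset.exists_subset_card_eq
        (show α ≤ (Finset.univ : Finset (Fin k)).card by
          rw [Finset.card_univ, Fintype.card_fin]; omega)
      exact ⟨⟨T, hT.2⟩⟩
    exact_mod_cast this
  have hkd : (k:ℝ) * d = (α:ℝ) * N := by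
    have h1 : ∑ i : Fin k, ∑ S : {S : Finset (Fin k) // S.card = α}, (if i ∈ S.1 then (1:ℝ) else 0) = (k:ℝ) * d := by
      rw [Finset.sum_congr rfl (fun i _ => hcount i), Finset.sum_const, Finset.card_univ]
      simp [nsmul_eq_mul]
    rw [← h1, Finset.sum_comm, Finset.sum_congr rfl (fun S _ => hcardS S),
      Finset.sum_const, Finset.card_univ]
    simp [nsmul_eq_mul, hN_def]
    ring
  clear_value N d c
  -- algebraic consequences
  have hcval : ((k:ℝ) - 1) * c = ((α:ℝ) - 1) * d := by linear_combination hdc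
  have hdceq : ((k:ℝ) - 1) * (d - c) = ((k:ℝ) - (α:ℝ)) * d := by linear_combination -hcval
  have hdc0 : (0:ℝ) < d - c := by nlinarith [mul_pos hkα hd0]
  have hαd0 : (0:ℝ) < (α:ℝ) * d := mul_pos (by linarith) hd0
  have hD0 : (d - c) * ((α:ℝ) * d) ≠ 0 := ne_of_gt (mul_pos hdc0 hαd0)
  set x : ℝ := (d + ((k:ℝ) - 2) * c) / ((d - c) * ((α:ℝ) * d)) with hx_def
  set y : ℝ := -c / ((d - c) * ((α:ℝ) * d)) with hy_def
  clear_value x y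
  have hy0 : y ≤ 0 := by
    rw [hy_def]
    exact div_nonpos_of_nonpos_of_nonneg (by linarith) (mul_pos hdc0 hαd0).le
  set B : Matrix (Fin k) (Fin k) ℝ := Matrix.of (fun i j => if i = j then x else y) with hB_def
  clear_value B
  have hAB : ((bigI k α)ᵀ * bigI k α) * B = 1 := by
    ext i j
    rw [Matrix.mul_apply]
    simp only [hB_def, Matrix.of_apply, Matrix.one_apply]
    have he : ∀ l : Fin k, ((bigI k α)ᵀ * bigI k α) i l * (if l = j then x else y)
        = (if i = l then d else c) * (if l = j then x else y) := fun l => by rw [hA i l]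
    rw [Finset.sum_congr rfl (fun l _ => he l)]
    rcases eq_or_ne i j with rfl | hij
    · rw [if_pos rfl]
      have : ∀ l : Fin k, (if i = l then d else c) * (if l = i then x else y)
          = if l = i then d * x else c * y := by
        intro l
        rcases eq_or_ne l i with rfl | h
        · rw [if_pos rfl, if_pos rfl, if_pos rfl]
        · rw [if_neg h, if_neg (Ne.symm h), if_neg h]
      rw [Finset.sum_congr rfl (fun l _ => this l), sum_ite_one i (d*x) (c*y)]
      simp only [Fintype.card_fin]
      rw [hx_def, hy_def]
      field_simp
      linear_combination (d - (k:ℝ)*c) * hdc + (((k:ℝ)-1)*c) * hcval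
    · rw [if_neg hij]
      have : ∀ l : Fin k, (if i = l then d else c) * (if l = j then x else y)
          = if l = i then d * y else if l = j then c * x else c * y := by
        intro l
        rcases eq_or_ne l i with rfl | h1
        · rw [if_pos rfl, if_pos rfl, if_neg hij]
        · rw [if_neg (Ne.symm h1), if_neg h1]
          rcases eq_or_ne l j with rfl | h2
          · rw [if_pos rfl, if_pos rfl]
          · rw [if_neg h2, if_neg h2]
      rw [Finset.sum_congr rfl (fun l _ => this l), sum_ite_two i j hij (d*y) (c*x) (c*y)]
      simp only [Fintype.card_fin]
      rw [hx_def, hy_def]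
      field_simp
      ring
  have hInv : Invertible ((bigI k α)ᵀ * bigI k α) :=
    invertibleOfRightInverse _ _ hAB
  have hUnit : IsUnit ((bigI k α)ᵀ * bigI k α) := isUnit_of_invertible _
  refine ⟨hUnit, ?_⟩
  rw [Matrix.inv_eq_right_inv hAB]
  -- analyze θ = B *ᵥ w
  set w : Fin k → ℝ := (bigI k α)ᵀ *ᵥ f with hw_def
  clear_value w
  have hw : ∀ i, w i = ∑ S : {S : Finset (Fin k) // S.card = α}, (if i ∈ S.1 then f S else 0) := by
    intro i
    rw [hw_def, Matrix.mulVec, dotProduct]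
    refine Finset.sum_congr rfl (fun S _ => ?_)
    simp only [Matrix.transpose_apply, bigI, Matrix.of_apply, ite_mul, one_mul, zero_mul]
  have hw0 : ∀ i, 0 ≤ w i := by
    intro i
    rw [hw i]
    refine Finset.sum_nonneg (fun S _ => ?_)
    split
    · exact (hf S).1
    · exact le_refl 0
  have hwle : ∀ i, w i ≤ C * d := by
    intro i
    rw [hw i, ← hcount i, Finset.mul_sum]
    refine Finset.sum_le_sum (fun S _ => ?_)
    split
    · simpa using (hf S).2
    · simp
  set s : ℝ := ∑ S : {S : Finset (Fin k) // S.card = α}, f S with hs_def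
  clear_value s
  have hs0 : 0 ≤ s := by
    rw [hs_def]; exact Finset.sum_nonneg (fun S _ => (hf S).1)
  have hsle : s ≤ C * N := by
    rw [hs_def, hN_def]
    calc ∑ S : {S : Finset (Fin k) // S.card = α}, f S ≤ ∑ S : {S : Finset (Fin k) // S.card = α}, C := Finset.sum_le_sum (fun S _ => (hf S).2)
    _ = C * (Fintype.card {S : Finset (Fin k) // S.card = α} : ℝ) := by
        rw [Finset.sum_const, Finset.card_univ, nsmul_eq_mul]; ring
  have hW : ∑ l, w l = (α:ℝ) * s := by
    rw [Finset.sum_congr rfl (fun l _ => hw l), Finset.sum_comm]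
    have : ∀ S : {S : Finset (Fin k) // S.card = α}, ∑ l : Fin k, (if l ∈ S.1 then f S else 0) = (α:ℝ) * f S := by
      intro S
      have : ∀ l : Fin k, (if l ∈ S.1 then f S else 0) = (if l ∈ S.1 then (1:ℝ) else 0) * f S := by
        intro l; split <;> simp
      rw [Finset.sum_congr rfl (fun l _ => this l), ← Finset.sum_mul, hcardS S]
    rw [Finset.sum_congr rfl (fun S _ => this S), ← Finset.mul_sum, hs_def]
  have hθ : ∀ i, (B *ᵥ w) i = (x - y) * w i + y * ((α:ℝ) * s) := by
    intro i
    rw [← hW, Matrix.mulVec, dotProduct]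
    simp only [hB_def, Matrix.of_apply]
    have : ∀ l : Fin k, (if i = l then x else y) * w l
        = y * w l + (if l = i then (x - y) * w l else 0) := by
      intro l
      rcases eq_or_ne l i with rfl | h
      · rw [if_pos rfl, if_pos rfl]; ring
      · rw [if_neg (Ne.symm h), if_neg h]; ring
    rw [Finset.sum_congr rfl (fun l _ => this l), Finset.sum_add_distrib,
      Finset.sum_ite_eq' Finset.univ i (fun l => (x - y) * w l), ← Finset.mul_sum]
    simp only [Finset.mem_univ, if_pos]
    ring
  have hxy : x - y = 1 / (d - c) := by
    rw [hx_def, hy_def]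
    field_simp
    linear_combination hdc
  set M : ℝ := C * ((k:ℝ) - 1) / ((k:ℝ) - (α:ℝ)) with hM_def
  clear_value M
  have hM0 : 0 ≤ M := le_of_lt (by rw [hM_def]; exact div_pos (mul_pos hC hk1) hkα)
  have hMeq : C * d / (d - c) = M := by
    rw [hM_def, div_eq_div_iff hdc0.ne' hkα.ne']
    linear_combination C * hdceq + 2 * C * hcval
  -- pointwise bounds
  have hub : ∀ i, (B *ᵥ w) i ≤ M := by
    intro i
    rw [hθ i, hxy]
    have h1 : y * ((α:ℝ) * s) ≤ 0 :=
      mul_nonpos_of_nonpos_of_nonneg hy0 (mul_nonneg (by linarith) hs0)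
    have h2 : 1 / (d - c) * w i ≤ 1 / (d - c) * (C * d) :=
      mul_le_mul_of_nonneg_left (hwle i) (one_div_nonneg.mpr hdc0.le)
    calc 1 / (d - c) * w i + y * ((α:ℝ) * s) ≤ 1 / (d - c) * (C * d) + 0 := by
          exact add_le_add h2 h1
      _ = C * d / (d - c) := by ring
      _ = M := hMeq
  have hcN : c * N ≤ d * d := by
    have heq : (α:ℝ) * ((k:ℝ) - 1) * (c * N) = ((α:ℝ) - 1) * (k:ℝ) * (d * d) := by
      linear_combination ((α:ℝ) * N) * hcval - (((α:ℝ) - 1) * d) * hkd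
    have h2 : ((α:ℝ) * ((k:ℝ) - 1)) * (d * d - c * N) = ((k:ℝ) - (α:ℝ)) * (d * d) := by
      linear_combination -heq
    have h3 : 0 ≤ ((α:ℝ) * ((k:ℝ) - 1)) * (d * d - c * N) := by
      rw [h2]; exact mul_nonneg hkα.le (mul_self_nonneg d)
    have h4 : (0:ℝ) < (α:ℝ) * ((k:ℝ) - 1) := mul_pos (by linarith) hk1
    have h5 : (0:ℝ) ≤ d * d - c * N :=
      le_of_mul_le_mul_left (by simpa using h3) h4
    linarith
  have hlb : ∀ i, -M ≤ (B *ᵥ w) i := by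
    intro i
    rw [hθ i, hxy]
    have h1 : 0 ≤ 1 / (d - c) * w i :=
      mul_nonneg (one_div_nonneg.mpr hdc0.le) (hw0 i)
    have h2 : y * ((α:ℝ) * (C * N)) ≤ y * ((α:ℝ) * s) := by
      apply mul_le_mul_of_nonpos_left _ hy0
      exact mul_le_mul_of_nonneg_left hsle (by linarith)
    have h3 : -M ≤ y * ((α:ℝ) * (C * N)) := by
      have hq : c * ((α:ℝ) * (C * N)) / ((d - c) * ((α:ℝ) * d)) ≤ M := by
        rw [← hMeq, div_le_div_iff₀ (mul_pos hdc0 hαd0) hdc0]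
        have hfin : (C * (α:ℝ) * (d - c)) * (c * N) ≤ (C * (α:ℝ) * (d - c)) * (d * d) :=
          mul_le_mul_of_nonneg_left hcN
            (mul_nonneg (mul_nonneg hC.le (by linarith)) hdc0.le)
        nlinarith [hfin]
      have hyw : y * ((α:ℝ) * (C * N)) = -(c * ((α:ℝ) * (C * N)) / ((d - c) * ((α:ℝ) * d))) := by
        rw [hy_def]; ring
      rw [hyw]
      linarith
    linarith
  -- conclude
  have hsq : ∀ i, (B *ᵥ w) i ^ 2 ≤ M ^ 2 := fun i => sq_le_sq' (hlb i) (hub i)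
  have : euclNorm (B *ᵥ w) ≤ Real.sqrt ((k:ℝ) * M ^ 2) := by
    rw [euclNorm]
    apply Real.sqrt_le_sqrt
    calc ∑ i, (B *ᵥ w) i ^ 2 ≤ ∑ _i : Fin k, M ^ 2 := Finset.sum_le_sum (fun i _ => hsq i)
      _ = (k:ℝ) * M ^ 2 := by
          rw [Finset.sum_const, Finset.card_univ, Fintype.card_fin, nsmul_eq_mul]
  refine this.trans (le_of_eq ?_)
  rw [Real.sqrt_mul (by positivity) (M ^ 2), Real.sqrt_sq hM0, hM_def]
  ring
end

section
/- (Deterministic core of Lemma 2 of the paper.) Let k ≥ 2 and 1 ≤ α ≤ k/2 be integers, let U be the collection of all size-α subsets of {1,…,k}, and let 𝐈 ∈ {0,1}^{|U|×k} be the matrix whose rows are the characteristic vectors 1_T for T ∈ U. Let f, g : U → ℝ satisfy |f(T) − g(T)| ≤ ε for every T ∈ U. Then the population least-squares coefficients satisfy ‖ (𝐈ᵀ𝐈)^{-1} 𝐈ᵀ f − (𝐈ᵀ𝐈)^{-1} 𝐈ᵀ g ‖ ≤ ε √(2k/α). -/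
open Finset Matrix

lemma count_subset {X : Type*} [DecidableEq X] (u s : Finset X) (hs : s ⊆ u) (n : ℕ)
    (hn : s.card ≤ n) :
    ((powersetCard n u).filter (fun t => s ⊆ t)).card = (u.card - s.card).choose (n - s.card) := by
  rw [← card_sdiff_of_subset hs, ← card_powersetCard (n - s.card) (u \ s)]
  apply Finset.card_bij' (fun t _ => t \ s) (fun w _ => w ∪ s)
  · intro t ht
    simp only [mem_filter, mem_powersetCard] at ht
    simp only [mem_powersetCard]
    exact ⟨sdiff_subset_sdiff ht.1.1 subset_rfl, by rw [card_sdiff_of_subset ht.2, ht.1.2]⟩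
  · intro w hw
    simp only [mem_powersetCard] at hw
    have hdisj : Disjoint w s := disjoint_of_subset_left hw.1 sdiff_disjoint
    simp only [mem_filter, mem_powersetCard]
    refine ⟨⟨union_subset (hw.1.trans (sdiff_subset)) hs, ?_⟩, subset_union_right⟩
    rw [card_union_of_disjoint hdisj, hw.2, Nat.sub_add_cancel hn]
  · intro t ht
    simp only [mem_filter] at ht
    exact sdiff_union_of_subset ht.2
  · intro w hw
    simp only [mem_powersetCard] at hw
    have hdisj : Disjoint w s := disjoint_of_subset_left hw.1 sdiff_disjoint
    exact union_sdiff_cancel_right hdisj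

lemma quad_lb (k α : ℕ) (hα1 : 1 ≤ α) (hα2 : 2 * α ≤ k) (x : Fin k → ℝ) :
    ((k-2).choose (α-1) : ℝ) * ∑ i, x i ^ 2 ≤
      ∑ T ∈ powersetCard α (univ : Finset (Fin k)), (∑ i ∈ T, x i) ^ 2 := by
  obtain ⟨b, rfl⟩ : ∃ b, α = b + 1 := ⟨α - 1, (Nat.succ_pred_eq_of_pos hα1).symm⟩
  obtain ⟨c, rfl⟩ : ∃ c, k = c + 2 := by
    refine ⟨k - 2, ?_⟩
    omega
  set U := powersetCard (b+1) (univ : Finset (Fin (c+2))) with hU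
  set c1 : ℕ := (c+1).choose b with hc1
  set c2 : ℕ := if 1 ≤ b then c.choose (b-1) else 0 with hc2
  have hcard : ∀ i j : Fin (c+2), (U.filter (fun T => i ∈ T ∧ j ∈ T)).card
      = if i = j then c1 else c2 := by
    intro i j
    by_cases hij : i = j
    · subst hij
      rw [if_pos rfl]
      have : (U.filter (fun T => i ∈ T ∧ i ∈ T)) = (U.filter (fun T => ({i} : Finset (Fin (c+2))) ⊆ T)) := by
        apply filter_congr; intro T _; simp
      rw [this, count_subset _ _ (subset_univ _) _ (by simp)]
      simp [hc1]
    · rw [if_neg hij]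
      have hpair : ({i, j} : Finset (Fin (c+2))).card = 2 := card_pair hij
      have : (U.filter (fun T => i ∈ T ∧ j ∈ T)) = (U.filter (fun T => ({i, j} : Finset (Fin (c+2))) ⊆ T)) := by
        apply filter_congr; intro T _; simp [insert_subset_iff]
      rw [this]
      by_cases hb : 1 ≤ b
      · rw [count_subset _ _ (subset_univ _) _ (by rw [hpair]; omega)]
        rw [hpair, hc2, if_pos hb]
        simp only [card_univ, Fintype.card_fin]
        congr 1 <;> omega
      · have hb0 : b = 0 := by omega
        subst hb0
        rw [hc2]
        simp only [if_neg (by norm_num : ¬ (1:ℕ) ≤ 0)]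
        rw [filter_eq_empty_iff.2, card_empty]
        intro T hT
        rw [hU, mem_powersetCard] at hT
        intro hsub
        have := card_le_card hsub
        omega
  -- expand the square
  have hexp : ∑ T ∈ U, (∑ i ∈ T, x i) ^ 2
      = ∑ i, ∑ j, ((U.filter (fun T => i ∈ T ∧ j ∈ T)).card : ℝ) * (x i * x j) := by
    have h1 : ∀ T ∈ U, (∑ i ∈ T, x i) ^ 2
        = ∑ i, ∑ j, (if i ∈ T ∧ j ∈ T then x i * x j else 0) := by
      intro T hT
      have : ∑ i ∈ T, x i = ∑ i, if i ∈ T then x i else 0 := by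
        rw [Finset.sum_ite_mem, univ_inter]
      rw [this, sq, Finset.sum_mul_sum]
      congr 1; ext i; congr 1; ext j
      by_cases h1 : i ∈ T <;> by_cases h2 : j ∈ T <;> simp [h1, h2]
    rw [Finset.sum_congr rfl h1, Finset.sum_comm]
    congr 1; ext i
    rw [Finset.sum_comm]
    congr 1; ext j
    rw [← Finset.sum_filter, Finset.sum_const, nsmul_eq_mul]
  rw [hexp]
  simp only [hcard]
  have hsplit : ∑ i, ∑ j, ((if i = j then c1 else c2 : ℕ) : ℝ) * (x i * x j)
      = (c2 : ℝ) * (∑ i, x i) ^ 2 + ((c1 : ℝ) - c2) * ∑ i, x i ^ 2 := by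
    have : ∀ i j : Fin (c+2), ((if i = j then c1 else c2 : ℕ) : ℝ) * (x i * x j)
        = (c2 : ℝ) * (x i * x j) + (if i = j then ((c1 : ℝ) - c2) * (x i * x j) else 0) := by
      intro i j; by_cases h : i = j <;> simp [h] <;> ring
    simp only [this, Finset.sum_add_distrib]
    congr 1
    · rw [sq, Finset.sum_mul_sum, Finset.mul_sum]
      congr 1; ext i
      rw [Finset.mul_sum]
    · have : ∀ i : Fin (c+2), ∑ j, (if i = j then ((c1 : ℝ) - c2) * (x i * x j) else 0)
          = ((c1:ℝ) - c2) * x i ^ 2 := by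
        intro i
        rw [Finset.sum_ite_eq]
        simp [sq]
      simp only [this]
      rw [← Finset.mul_sum]
  rw [hsplit]
  have hkey : (c2 : ℕ) + c.choose b ≤ c1 := by
    rcases Nat.eq_zero_or_pos b with hb | hb
    · subst hb; simp [hc1, hc2]
    · obtain ⟨b', rfl⟩ : ∃ b', b = b' + 1 := ⟨b - 1, by omega⟩
      rw [hc1, hc2, if_pos (by omega)]
      simp only [Nat.add_sub_cancel]
      rw [Nat.choose_succ_succ]
  have h1 : ((c+2) - 2 : ℕ).choose ((b+1) - 1) = c.choose b := by norm_num
  rw [h1]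
  have hsq : (0:ℝ) ≤ ∑ i, x i ^ 2 := Finset.sum_nonneg fun i _ => sq_nonneg _
  have h2 : (c.choose b : ℝ) ≤ (c1:ℝ) - c2 := by
    have : (c2:ℝ) + c.choose b ≤ c1 := by exact_mod_cast hkey
    linarith
  have h3 : (0:ℝ) ≤ (c2:ℝ) * (∑ i, x i)^2 := mul_nonneg (Nat.cast_nonneg _) (sq_nonneg _)
  nlinarith [mul_le_mul_of_nonneg_right h2 hsq]

lemma choose_ineq (k α : ℕ) (hα1 : 1 ≤ α) (hα2 : 2 * α ≤ k) :
    α * k.choose α ≤ 2 * k * ((k-2).choose (α-1)) := by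
  obtain ⟨b, rfl⟩ : ∃ b, α = b + 1 := ⟨α - 1, (Nat.succ_pred_eq_of_pos hα1).symm⟩
  obtain ⟨c, rfl⟩ : ∃ c, k = c + 2 := ⟨k - 2, by omega⟩
  have h1 : (c+2) * (c+1).choose b = (c+2).choose (b+1) * (b+1) :=
    Nat.add_one_mul_choose_eq (c+1) b
  have h2 : (c+1).choose b ≤ 2 * c.choose b := by
    rcases Nat.eq_zero_or_pos b with hb | hb
    · subst hb; simp
    · obtain ⟨b', rfl⟩ : ∃ b', b = b' + 1 := ⟨b - 1, by omega⟩
      rw [Nat.choose_succ_succ]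
      have : c.choose b' ≤ c.choose (b'+1) :=
        Nat.choose_le_succ_of_lt_half_left (by omega)
      simp only [Nat.succ_eq_add_one]
      omega
  calc (b+1) * (c+2).choose (b+1) = (c+2) * (c+1).choose b := by rw [h1]; ring
    _ ≤ (c+2) * (2 * c.choose b) := Nat.mul_le_mul_left _ h2
    _ = 2 * (c+2) * ((c+2-2).choose (b+1-1)) := by simp; ring

/-- The population least-squares coefficients `θ̄ = (𝐈ᵀ𝐈)⁻¹ 𝐈ᵀ f`. -/
noncomputable def thetaBar (k α : ℕ) (f : {S : Finset (Fin k) // S.card = α} → ℝ) :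
    Fin k → ℝ :=
  ((bigI k α)ᵀ * bigI k α)⁻¹ *ᵥ ((bigI k α)ᵀ *ᵥ f)

theorem stmt_10 (k α : ℕ) (hk : 2 ≤ k) (hα1 : 1 ≤ α) (hα2 : 2 * α ≤ k) (ε : ℝ)
    (f g : {S : Finset (Fin k) // S.card = α} → ℝ)
    (hfg : ∀ T, |f T - g T| ≤ ε) :
    euclNorm (thetaBar k α f - thetaBar k α g) ≤ ε * Real.sqrt (2 * (k : ℝ) / α) := by
  classical
  set I := bigI k α with hIdef
  set M := Iᵀ * I with hMdef
  set a : ℕ := (k-2).choose (α-1) with hadef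
  have ha_pos : 0 < a := Nat.choose_pos (by omega)
  have haR : (0:ℝ) < a := by exact_mod_cast ha_pos
  -- mulVec of I
  have hIv : ∀ (x : Fin k → ℝ) (T : {S : Finset (Fin k) // S.card = α}),
      (I *ᵥ x) T = ∑ i ∈ T.1, x i := by
    intro x T
    simp only [hIdef, bigI, Matrix.mulVec, dotProduct, Matrix.of_apply, ite_mul, one_mul,
      zero_mul]
    rw [Finset.sum_ite_mem, univ_inter]
  -- quadratic form
  have hqf : ∀ x : Fin k → ℝ, x ⬝ᵥ (M *ᵥ x) = ∑ T, ((I *ᵥ x) T)^2 := by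
    intro x
    rw [hMdef, ← mulVec_mulVec, dotProduct_mulVec, vecMul_transpose]
    simp [dotProduct, sq]
  have hquad : ∀ x : Fin k → ℝ, (a:ℝ) * ∑ i, x i ^ 2 ≤ x ⬝ᵥ (M *ᵥ x) := by
    intro x
    rw [hqf]
    have h1 : ∑ T : {S : Finset (Fin k) // S.card = α}, ((I *ᵥ x) T)^2
        = ∑ T ∈ powersetCard α (univ : Finset (Fin k)), (∑ i ∈ T, x i)^2 := by
      rw [Finset.sum_subtype (powersetCard α univ)
        (fun T => Finset.mem_powersetCard_univ) (fun T => (∑ i ∈ T, x i)^2)]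
      exact Finset.sum_congr rfl fun T _ => by rw [hIv]
    rw [h1]
    exact quad_lb k α hα1 hα2 x
  -- positive definiteness
  have hMpd : M.PosDef := by
    refine Matrix.PosDef.of_dotProduct_mulVec_pos ?_ (fun x hx => ?_)
    · ext i j
      simp only [conjTranspose_apply, Matrix.mul_apply, hMdef, transpose_apply, star_trivial]
      exact Finset.sum_congr rfl fun T _ => mul_comm _ _
    · simp only [star_trivial]
      obtain ⟨i, hi⟩ : ∃ i, x i ≠ 0 := Function.ne_iff.1 hx
      have hpos : 0 < ∑ i, x i ^ 2 :=
        Finset.sum_pos' (fun j _ => sq_nonneg _)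
          ⟨i, mem_univ i, (sq_nonneg _).lt_of_ne (Ne.symm (pow_ne_zero 2 hi))⟩
      calc (0:ℝ) < (a:ℝ) * ∑ i, x i ^ 2 := by positivity
        _ ≤ x ⬝ᵥ (M *ᵥ x) := hquad x
  have hMunit : IsUnit M.det := (Matrix.isUnit_iff_isUnit_det M).1 hMpd.isUnit
  -- theta
  set θ := thetaBar k α f - thetaBar k α g with hθdef
  have hθ : θ = M⁻¹ *ᵥ (Iᵀ *ᵥ (f - g)) := by
    rw [hθdef]
    show M⁻¹ *ᵥ (Iᵀ *ᵥ f) - M⁻¹ *ᵥ (Iᵀ *ᵥ g) = _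
    rw [← mulVec_sub, ← mulVec_sub]
  have hMθ : M *ᵥ θ = Iᵀ *ᵥ (f - g) := by
    rw [hθ, mulVec_mulVec, Matrix.mul_nonsing_inv _ hMunit, one_mulVec]
  set y := I *ᵥ θ with hydef
  -- sum of squares of y equals inner product with (f-g)
  have hyy : ∑ T, y T ^ 2 = ∑ T, y T * (f - g) T := by
    have e3 : θ ⬝ᵥ (M *ᵥ θ) = ∑ T, y T ^ 2 := hqf θ
    have e4 : θ ⬝ᵥ (M *ᵥ θ) = ∑ T, y T * (f - g) T := by
      rw [hMθ, dotProduct_mulVec, vecMul_transpose]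
      rfl
    exact e3.symm.trans e4
  -- Cauchy-Schwarz gives ∑ y² ≤ ∑ (f-g)²
  have hy2 : ∑ T, y T ^ 2 ≤ ∑ T, (f - g) T ^ 2 := by
    have hcs := Finset.sum_mul_sq_le_sq_mul_sq univ y (f - g)
    have hynn : (0:ℝ) ≤ ∑ T, y T ^ 2 := Finset.sum_nonneg fun _ _ => sq_nonneg _
    have hfnn : (0:ℝ) ≤ ∑ T, (f - g) T ^ 2 := Finset.sum_nonneg fun _ _ => sq_nonneg _
    rcases hynn.eq_or_lt with h0 | h0
    · linarith
    · nlinarith [hyy]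
  -- ε nonneg
  obtain ⟨S₀, -, hS₀⟩ := Finset.exists_subset_card_eq
    (show α ≤ (univ : Finset (Fin k)).card by simp; omega)
  have hεnn : 0 ≤ ε := le_trans (abs_nonneg _) (hfg ⟨S₀, hS₀⟩)
  -- bound ∑ (f-g)²
  have hH : ∑ T, (f - g) T ^ 2 ≤ ε^2 * (k.choose α) := by
    calc ∑ T, (f - g) T ^ 2 ≤ ∑ T : {S : Finset (Fin k) // S.card = α}, ε^2 := by
          apply Finset.sum_le_sum
          intro T _
          have h1 := hfg T
          have h2 : (f - g) T = f T - g T := rfl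
          rw [h2, ← sq_abs]
          exact pow_le_pow_left₀ (abs_nonneg _) h1 2
      _ = ε^2 * (k.choose α) := by
          rw [Finset.sum_const, card_univ, Fintype.card_finset_len, Fintype.card_fin,
            nsmul_eq_mul, mul_comm]
  -- main chain
  have hmain : (a:ℝ) * ∑ i, θ i ^ 2 ≤ ε^2 * (k.choose α) := by
    calc (a:ℝ) * ∑ i, θ i ^ 2 ≤ θ ⬝ᵥ (M *ᵥ θ) := hquad θ
      _ = ∑ T, y T ^ 2 := by rw [hqf]
      _ ≤ ∑ T, (f - g) T ^ 2 := hy2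
      _ ≤ ε^2 * (k.choose α) := hH
  -- final arithmetic
  have hαR : (0:ℝ) < α := by exact_mod_cast hα1
  have hnat : (α:ℝ) * (k.choose α) ≤ 2 * k * a := by
    exact_mod_cast choose_ineq k α hα1 hα2
  have hfinal : ∑ i, θ i ^ 2 ≤ ε^2 * (2 * (k:ℝ) / α) := by
    rw [mul_div_assoc', le_div_iff₀ hαR]
    have h5 : ((∑ i, θ i ^ 2) * α) * a ≤ (ε^2 * (2 * (k:ℝ))) * a := by
      nlinarith [mul_le_mul_of_nonneg_left hmain hαR.le,
        mul_le_mul_of_nonneg_left hnat (sq_nonneg ε)]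
    exact le_of_mul_le_mul_right h5 haR
  rw [euclNorm, show ε * Real.sqrt (2 * (k:ℝ) / α) = Real.sqrt (ε^2 * (2 * (k:ℝ) / α)) by
    rw [Real.sqrt_mul (sq_nonneg ε), Real.sqrt_sq hεnn]]
  exact Real.sqrt_le_sqrt hfinal
end

section
/- (Deterministic core of Lemma 3 of the paper.) Let k ≥ 2 and 1 ≤ α ≤ k−1 be integers, C > 0, let S_1,…,S_n be subsets of {1,…,k} of cardinality α, and let f be a function on these subsets with |f(S_i)| ≤ C for all i. Let Z = I_nᵀ I_n / n, let v ∈ ℝ^k have coordinates v_j = Σ_{i : j ∈ S_i} f(S_i), and let M be the second-moment matrix of a uniformly random size-α subset of {1,…,k}. If ‖Z − M‖₂ < λmin(M), then Z is invertible, and the least-squares coefficients θ̂ = Z^{-1} (v/n) satisfy, for all i ≠ j, | (θ̂_i − θ̂_j) − (k(k−1)/(α(k−α))) · (v_i − v_j)/n | ≤ √2 · C α · ‖Z − M‖₂ / ( λmin(M) ( λmin(M) − ‖Z − M‖₂ ) ). -/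
open Finset Matrix

section counting
variable {γ : Type*} [DecidableEq γ]

lemma count_erase (s : Finset γ) (i : γ) (hi : i ∈ s) (m : ℕ)
    (p : Finset γ → Prop) [DecidablePred p]
    (hp : ∀ T : Finset γ, i ∉ T → (p (insert i T) ↔ p T)) :
    ((Finset.powersetCard (m+1) s).filter (fun T => i ∈ T ∧ p T)).card
      = ((Finset.powersetCard m (s.erase i)).filter p).card := by
  apply Finset.card_bij (fun T _ => T.erase i)
  · intro T hT
    simp only [mem_filter, mem_powersetCard] at hT
    refine mem_filter.2 ⟨mem_powersetCard.2 ⟨erase_subset_erase i hT.1.1, ?_⟩, ?_⟩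
    · rw [card_erase_of_mem hT.2.1, hT.1.2]; omega
    · have := hp (T.erase i) (notMem_erase _ _)
      rw [insert_erase hT.2.1] at this
      exact this.1 hT.2.2
  · intro T hT T' hT' h
    simp only [mem_filter] at hT hT'
    rw [← insert_erase hT.2.1, ← insert_erase hT'.2.1, h]
  · intro U hU
    simp only [mem_filter, mem_powersetCard] at hU
    have hiU : i ∉ U := fun h => (mem_erase.1 (hU.1.1 h)).1 rfl
    refine ⟨insert i U, mem_filter.2 ⟨mem_powersetCard.2 ⟨?_, ?_⟩, ?_, ?_⟩, ?_⟩
    · exact insert_subset hi (hU.1.1.trans (erase_subset _ _))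
    · rw [card_insert_of_notMem hiU, hU.1.2]
    · exact mem_insert_self _ _
    · exact (hp U hiU).2 hU.2
    · exact erase_insert hiU

lemma count_one (s : Finset γ) (i : γ) (hi : i ∈ s) (m : ℕ) :
    ((Finset.powersetCard (m+1) s).filter (fun T => i ∈ T)).card
      = (s.card - 1).choose m := by
  have h := count_erase s i hi m (fun _ => True) (fun _ _ => Iff.rfl)
  simp only [and_true, filter_true] at h
  rw [h, card_powersetCard, card_erase_of_mem hi]

lemma count_two (s : Finset γ) (i j : γ) (hi : i ∈ s) (hj : j ∈ s) (hij : i ≠ j) (m : ℕ) :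
    ((Finset.powersetCard (m+2) s).filter (fun T => i ∈ T ∧ j ∈ T)).card
      = (s.card - 2).choose m := by
  have h := count_erase s i hi (m+1) (fun T => j ∈ T)
    (fun T hT => by simp [Finset.mem_insert, hij.symm])
  have h2 : s.card - 1 - 1 = s.card - 2 := by omega
  rw [h, count_one _ j (mem_erase.2 ⟨hij.symm, hj⟩) m, card_erase_of_mem hi, h2]
end counting

def charVec (k : ℕ) (S : Finset (Fin k)) : Fin k → ℝ := fun i => if i ∈ S then 1 else 0

noncomputable def secondMoment (k α : ℕ) : Matrix (Fin k) (Fin k) ℝ :=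
  ((Finset.powersetCard α (univ : Finset (Fin k))).card : ℝ)⁻¹ •
    ∑ T ∈ Finset.powersetCard α (univ : Finset (Fin k)),
      vecMulVec (charVec k T) (charVec k T)

lemma choose_key {k α : ℕ} (hα1 : 1 ≤ α) (hk : 1 ≤ k) :
    k * (k-1).choose (α-1) = α * k.choose α := by
  have := Nat.add_one_mul_choose_eq (k-1) (α-1)
  have h1 : k - 1 + 1 = k := by omega
  have h2 : α - 1 + 1 = α := by omega
  rw [h1, h2] at this
  rw [this]; ring

lemma choose_key2 {k α : ℕ} (hα2 : 2 ≤ α) (hk : 2 ≤ k) :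
    (k * (k-1)) * (k-2).choose (α-2) = (α * (α-1)) * k.choose α := by
  have h1 := choose_key (k := k-1) (α := α-1) (by omega) (by omega)
  have h2 := choose_key (k := k) (α := α) (by omega) (by omega)
  have e1 : k - 1 - 1 = k - 2 := by omega
  have e2 : α - 1 - 1 = α - 2 := by omega
  rw [e1, e2] at h1
  calc (k * (k-1)) * (k-2).choose (α-2) = k * ((k-1) * (k-2).choose (α-2)) := by ring
    _ = k * ((α-1) * (k-1).choose (α-1)) := by rw [h1]
    _ = (α-1) * (k * (k-1).choose (α-1)) := by ring
    _ = (α-1) * (α * k.choose α) := by rw [h2]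
    _ = (α * (α-1)) * k.choose α := by ring

lemma secondMoment_apply (k α : ℕ) (i j : Fin k) :
    secondMoment k α i j =
      ((k.choose α : ℝ))⁻¹ *
        (((Finset.powersetCard α (univ : Finset (Fin k))).filter
          (fun T => i ∈ T ∧ j ∈ T)).card : ℝ) := by
  unfold secondMoment charVec
  rw [Matrix.smul_apply, Matrix.sum_apply]
  simp only [vecMulVec_apply, card_powersetCard, card_univ, Fintype.card_fin]
  rw [smul_eq_mul]
  congr 1
  rw [← Finset.sum_boole]
  apply Finset.sum_congr rfl
  intro T _
  by_cases hi : i ∈ T <;> by_cases hj : j ∈ T <;> simp [hi, hj]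

lemma secondMoment_entry {k α : ℕ} (hk : 2 ≤ k) (hα1 : 1 ≤ α) (hαk : α ≤ k - 1)
    (i j : Fin k) :
    secondMoment k α i j = if i = j then (α : ℝ) / k
      else (α : ℝ) * ((α : ℝ) - 1) / ((k : ℝ) * ((k : ℝ) - 1)) := by
  have hαk' : α ≤ k := by omega
  have hN : (0:ℝ) < (k.choose α : ℝ) := by
    exact_mod_cast Nat.choose_pos hαk'
  have hk0 : (0:ℝ) < (k:ℝ) := by positivity
  have hk1 : (0:ℝ) < (k:ℝ) - 1 := by
    have : (2:ℝ) ≤ (k:ℝ) := by exact_mod_cast hk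
    linarith
  rw [secondMoment_apply]
  by_cases hij : i = j
  · subst hij
    simp only [if_pos rfl]
    have hfc : ((Finset.powersetCard α (univ : Finset (Fin k))).filter
        (fun T => i ∈ T ∧ i ∈ T)) = ((Finset.powersetCard α (univ : Finset (Fin k))).filter
        (fun T => i ∈ T)) := by
      apply Finset.filter_congr; intro T _; simp
    rw [hfc]
    obtain ⟨m, rfl⟩ : ∃ m, α = m + 1 := ⟨α - 1, by omega⟩
    rw [count_one _ i (mem_univ i) m, card_univ, Fintype.card_fin]
    have hkey := choose_key (k := k) (α := m+1) (by omega) (by omega)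
    have : ((k-1).choose (m+1-1) : ℝ) * k = (m+1 : ℕ) * (k.choose (m+1) : ℝ) := by
      exact_mod_cast congrArg (Nat.cast : ℕ → ℝ) (by rw [← hkey]; ring)
    simp only [Nat.add_sub_cancel] at this ⊢
    field_simp
    push_cast at this ⊢
    rw [mul_div_assoc', eq_div_iff hk0.ne']
    linarith
  · rw [if_neg hij]
    by_cases hα2 : 2 ≤ α
    · obtain ⟨m, rfl⟩ : ∃ m, α = m + 2 := ⟨α - 2, by omega⟩
      rw [count_two _ i j (mem_univ i) (mem_univ j) hij m, card_univ, Fintype.card_fin]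
      have hkey := choose_key2 (k := k) (α := m+2) (by omega) hk
      have hc : ((k:ℝ) * ((k:ℝ)-1)) * ((k-2).choose (m+2-2) : ℝ)
          = ((m+2:ℕ) : ℝ) * (((m+2:ℕ):ℝ) - 1) * (k.choose (m+2) : ℝ) := by
        have := congrArg (Nat.cast : ℕ → ℝ) hkey
        push_cast [Nat.cast_sub (by omega : 1 ≤ k)] at this
        push_cast
        convert this using 2 <;> push_cast <;> ring
      simp only [Nat.add_sub_cancel] at hc ⊢
      field_simp
      push_cast at hc ⊢
      nlinarith [hc]
    · have hα : α = 1 := by omega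
      subst hα
      have : ((Finset.powersetCard 1 (univ : Finset (Fin k))).filter
          (fun T => i ∈ T ∧ j ∈ T)) = ∅ := by
        apply Finset.filter_eq_empty_iff.2
        intro T hT
        rw [mem_powersetCard] at hT
        rintro ⟨hiT, hjT⟩
        have := Finset.one_lt_card.2 ⟨i, hiT, j, hjT, hij⟩
        omega
      rw [this]
      simp

noncomputable def specNorm {k : ℕ} (A : Matrix (Fin k) (Fin k) ℝ) : ℝ :=
  ‖Matrix.toEuclideanCLM (𝕜 := ℝ) A‖

noncomputable def lamMin {k : ℕ} (A : Matrix (Fin k) (Fin k) ℝ) : ℝ :=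
  sInf (spectrum ℝ A)

noncomputable def toE {k : ℕ} : (Fin k → ℝ) ≃ₗ[ℝ] EuclideanSpace ℝ (Fin k) :=
  (WithLp.linearEquiv 2 ℝ (Fin k → ℝ)).symm

lemma toE_apply {k : ℕ} (x : Fin k → ℝ) (i : Fin k) : toE x i = x i := rfl

lemma toE_norm {k : ℕ} (x : Fin k → ℝ) : ‖toE x‖ = Real.sqrt (∑ i, x i ^ 2) := by
  rw [EuclideanSpace.norm_eq]
  congr 1
  exact Finset.sum_congr rfl fun i _ => by rw [toE_apply, Real.norm_eq_abs, sq_abs]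

lemma toE_normsq {k : ℕ} (x : Fin k → ℝ) : ‖toE x‖ ^ 2 = ∑ i, x i ^ 2 := by
  rw [toE_norm, Real.sq_sqrt]
  positivity

lemma toE_inner {k : ℕ} (x y : Fin k → ℝ) : (inner ℝ (toE x) (toE y) : ℝ) = x ⬝ᵥ y := by
  rw [PiLp.inner_apply]
  simp only [RCLike.inner_apply, starRingEnd_apply, star_trivial]
  simp only [dotProduct]
  exact Finset.sum_congr rfl fun i _ => mul_comm _ _

lemma dot_le_norms {k : ℕ} (x y : Fin k → ℝ) : |x ⬝ᵥ y| ≤ ‖toE x‖ * ‖toE y‖ := by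
  rw [← toE_inner]
  exact abs_real_inner_le_norm _ _

lemma dot_le_norms' {k : ℕ} (x y : Fin k → ℝ) : x ⬝ᵥ y ≤ ‖toE x‖ * ‖toE y‖ :=
  (le_abs_self _).trans (dot_le_norms x y)

lemma specNorm_nonneg {k : ℕ} (A : Matrix (Fin k) (Fin k) ℝ) : 0 ≤ specNorm A :=
  norm_nonneg _

lemma norm_mulVec_le {k : ℕ} (A : Matrix (Fin k) (Fin k) ℝ) (x : Fin k → ℝ) :
    ‖toE (A *ᵥ x)‖ ≤ specNorm A * ‖toE x‖ := by
  have h := (Matrix.toEuclideanCLM (𝕜 := ℝ) A).le_opNorm (toE x)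
  have he : (Matrix.toEuclideanCLM (𝕜 := ℝ) A) (toE x) = toE (A *ᵥ x) := by
    show (Matrix.toEuclideanCLM (𝕜 := ℝ) A) (WithLp.toLp 2 x) = _
    rw [Matrix.toEuclideanCLM_toLp]
    rfl
  rwa [he] at h

noncomputable def aaR (k α : ℕ) : ℝ := (α:ℝ) * ((k:ℝ) - (α:ℝ)) / ((k:ℝ) * ((k:ℝ) - 1))
noncomputable def dbR (k α : ℕ) : ℝ := (α:ℝ) * ((α:ℝ) - 1) / ((k:ℝ) * ((k:ℝ) - 1))

section withHyp
variable {k α : ℕ}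

lemma kR_pos (hk : 2 ≤ k) : (0:ℝ) < (k:ℝ) := by
  have h : (2:ℝ) ≤ (k:ℝ) := by exact_mod_cast hk
  linarith
lemma kR1_pos (hk : 2 ≤ k) : (0:ℝ) < (k:ℝ) - 1 := by
  have h : (2:ℝ) ≤ (k:ℝ) := by exact_mod_cast hk
  linarith
lemma αR_pos (hα1 : 1 ≤ α) : (0:ℝ) < (α:ℝ) := by
  have h : (1:ℝ) ≤ (α:ℝ) := by exact_mod_cast hα1
  linarith
lemma kαR_pos (hk : 2 ≤ k) (hαk : α ≤ k - 1) : (0:ℝ) < (k:ℝ) - (α:ℝ) := by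
  have h : α + 1 ≤ k := by omega
  have h2 : (α:ℝ) + 1 ≤ (k:ℝ) := by exact_mod_cast h
  linarith

lemma aaR_pos (hk : 2 ≤ k) (hα1 : 1 ≤ α) (hαk : α ≤ k - 1) : 0 < aaR k α := by
  unfold aaR
  have h1 := kR_pos (k := k) hk
  have h2 := kR1_pos (k := k) hk
  have h3 := αR_pos (α := α) hα1
  have h4 := kαR_pos hk hαk
  positivity

lemma dbR_nonneg (hk : 2 ≤ k) (hα1 : 1 ≤ α) : 0 ≤ dbR k α := by
  unfold dbR
  have h1 := kR_pos (k := k) hk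
  have h2 := kR1_pos (k := k) hk
  have h3 : (1:ℝ) ≤ (α:ℝ) := by exact_mod_cast hα1
  have h4 : (0:ℝ) ≤ (α:ℝ) - 1 := by linarith
  positivity

lemma da_split (hk : 2 ≤ k) : (α:ℝ) / k = aaR k α + dbR k α := by
  unfold aaR dbR
  have h1 := (kR_pos (k := k) hk).ne'
  have h2 := (kR1_pos (k := k) hk).ne'
  field_simp
  ring

lemma mulVec_secondMoment (hk : 2 ≤ k) (hα1 : 1 ≤ α) (hαk : α ≤ k - 1) (x : Fin k → ℝ) :
    secondMoment k α *ᵥ x = fun i => aaR k α * x i + dbR k α * (∑ j, x j) := by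
  funext i
  show (fun j => secondMoment k α i j) ⬝ᵥ x = _
  unfold dotProduct
  have hrw : ∀ j, secondMoment k α i j * x j
      = dbR k α * x j + (if i = j then aaR k α * x j else 0) := by
    intro j
    rw [secondMoment_entry hk hα1 hαk]
    by_cases h : i = j
    · rw [if_pos h, if_pos h, da_split hk]; ring
    · rw [if_neg h, if_neg h]; unfold dbR; ring
  rw [Finset.sum_congr rfl fun j _ => hrw j, Finset.sum_add_distrib,
    Finset.sum_ite_eq Finset.univ i (fun j => aaR k α * x j), if_pos (Finset.mem_univ i),
    ← Finset.mul_sum]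
  ring

lemma quad_eq (hk : 2 ≤ k) (hα1 : 1 ≤ α) (hαk : α ≤ k - 1) (x : Fin k → ℝ) :
    x ⬝ᵥ (secondMoment k α *ᵥ x)
      = aaR k α * (∑ i, x i ^ 2) + dbR k α * (∑ i, x i) ^ 2 := by
  rw [mulVec_secondMoment hk hα1 hαk]
  unfold dotProduct
  have hrw : ∀ i, x i * (aaR k α * x i + dbR k α * (∑ j, x j))
      = aaR k α * x i ^ 2 + (dbR k α * (∑ j, x j)) * x i := by intro i; ring
  rw [Finset.sum_congr rfl fun i _ => hrw i, Finset.sum_add_distrib, ← Finset.mul_sum,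
    ← Finset.mul_sum]
  ring

lemma quad_lb_s13 (hk : 2 ≤ k) (hα1 : 1 ≤ α) (hαk : α ≤ k - 1) (x : Fin k → ℝ) :
    aaR k α * (∑ i, x i ^ 2) ≤ x ⬝ᵥ (secondMoment k α *ᵥ x) := by
  rw [quad_eq hk hα1 hαk]
  nlinarith [dbR_nonneg (k := k) hk hα1, sq_nonneg (∑ i, x i)]

lemma secondMoment_symm (hk : 2 ≤ k) (hα1 : 1 ≤ α) (hαk : α ≤ k - 1) : (secondMoment k α)ᵀ = secondMoment k α := by
  ext i j
  rw [Matrix.transpose_apply, secondMoment_entry hk hα1 hαk,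
    secondMoment_entry hk hα1 hαk]
  by_cases h : i = j
  · simp [h]
  · rw [if_neg h, if_neg (Ne.symm h)]

end withHyp

lemma norm_lb_of_quad {k : ℕ} {B : Matrix (Fin k) (Fin k) ℝ} {c : ℝ} (hc : 0 ≤ c)
    (h : ∀ t, c * (∑ i, t i ^ 2) ≤ t ⬝ᵥ (B *ᵥ t)) (t : Fin k → ℝ) :
    c * ‖toE t‖ ≤ ‖toE (B *ᵥ t)‖ := by
  rcases eq_or_ne (‖toE t‖) 0 with h0 | h0
  · rw [h0, mul_zero]; exact norm_nonneg _
  · have hpos : 0 < ‖toE t‖ := (norm_nonneg _).lt_of_ne (Ne.symm h0)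
    have h1 := h t
    rw [← toE_normsq] at h1
    have h2 := dot_le_norms' t (B *ᵥ t)
    nlinarith

lemma inj_of_norm_lb {k : ℕ} {B : Matrix (Fin k) (Fin k) ℝ} {c : ℝ} (hc : 0 < c)
    (h : ∀ t, c * ‖toE t‖ ≤ ‖toE (B *ᵥ t)‖) : Function.Injective B.mulVec := by
  intro x y hxy
  have h1 := h (x - y)
  rw [Matrix.mulVec_sub, hxy, sub_self] at h1
  simp only [map_zero, norm_zero] at h1
  have h2 : ‖toE (x - y)‖ = 0 :=
    le_antisymm (by nlinarith [norm_nonneg (toE (x - y))]) (norm_nonneg _)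
  have h3 : x - y = 0 := by
    have := norm_eq_zero.1 h2
    simpa using (LinearEquiv.map_eq_zero_iff toE).1 this
  exact sub_eq_zero.1 h3

lemma inv_norm_le {k : ℕ} {B : Matrix (Fin k) (Fin k) ℝ} {c : ℝ} (hc : 0 < c)
    (hU : IsUnit B) (h : ∀ t, c * ‖toE t‖ ≤ ‖toE (B *ᵥ t)‖) (z : Fin k → ℝ) :
    ‖toE (B⁻¹ *ᵥ z)‖ ≤ c⁻¹ * ‖toE z‖ := by
  have hdet := B.isUnit_iff_isUnit_det.1 hU
  have hz := h (B⁻¹ *ᵥ z)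
  rw [Matrix.mulVec_mulVec, Matrix.mul_nonsing_inv B hdet, Matrix.one_mulVec] at hz
  calc ‖toE (B⁻¹ *ᵥ z)‖ = c⁻¹ * (c * ‖toE (B⁻¹ *ᵥ z)‖) := by
        rw [← mul_assoc, inv_mul_cancel₀ hc.ne', one_mul]
    _ ≤ c⁻¹ * ‖toE z‖ := by
        exact mul_le_mul_of_nonneg_left hz (inv_nonneg.2 hc.le)

def uvec (k : ℕ) (i j : Fin k) : Fin k → ℝ := fun l => if l = i then 1 else if l = j then -1 else 0

section uv
variable {k α : ℕ} {i j : Fin k}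

lemma uvec_split (hij : i ≠ j) (l : Fin k) :
    uvec k i j l = (if l = i then (1:ℝ) else 0) + (if l = j then (-1:ℝ) else 0) := by
  unfold uvec
  by_cases h1 : l = i
  · subst h1; rw [if_pos rfl, if_pos rfl, if_neg hij]; ring
  · by_cases h2 : l = j <;> simp [h1, h2, Ne.symm hij]

lemma uvec_sum (hij : i ≠ j) : ∑ l, uvec k i j l = 0 := by
  rw [Finset.sum_congr rfl fun l _ => uvec_split hij l, Finset.sum_add_distrib,
    Finset.sum_ite_eq' Finset.univ i (fun _ => (1:ℝ)),
    Finset.sum_ite_eq' Finset.univ j (fun _ => (-1:ℝ))]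
  simp

lemma uvec_sumsq (hij : i ≠ j) : ∑ l, (uvec k i j l) ^ 2 = 2 := by
  have h : ∀ l, (uvec k i j l) ^ 2
      = (if l = i then (1:ℝ) else 0) + (if l = j then (1:ℝ) else 0) := by
    intro l
    unfold uvec
    by_cases h1 : l = i
    · subst h1; rw [if_pos rfl, if_pos rfl, if_neg hij]; ring
    · by_cases h2 : l = j <;> simp [h1, h2, Ne.symm hij]
  rw [Finset.sum_congr rfl fun l _ => h l, Finset.sum_add_distrib,
    Finset.sum_ite_eq' Finset.univ i (fun _ => (1:ℝ)),
    Finset.sum_ite_eq' Finset.univ j (fun _ => (1:ℝ))]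
  norm_num

lemma uvec_norm (hij : i ≠ j) : ‖toE (uvec k i j)‖ = Real.sqrt 2 := by
  rw [toE_norm, uvec_sumsq hij]

lemma uvec_dot (hij : i ≠ j) (x : Fin k → ℝ) : uvec k i j ⬝ᵥ x = x i - x j := by
  unfold dotProduct
  have h : ∀ l, uvec k i j l * x l
      = (if l = i then x l else 0) + (if l = j then -x l else 0) := by
    intro l
    unfold uvec
    by_cases h1 : l = i
    · subst h1; rw [if_pos rfl, if_pos rfl, if_neg hij]; ring
    · by_cases h2 : l = j <;> simp [h1, h2, Ne.symm hij]
  rw [Finset.sum_congr rfl fun l _ => h l, Finset.sum_add_distrib,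
    Finset.sum_ite_eq' Finset.univ i (fun l => x l),
    Finset.sum_ite_eq' Finset.univ j (fun l => -x l)]
  simp
  ring

lemma eig_uvec (hk : 2 ≤ k) (hα1 : 1 ≤ α) (hαk : α ≤ k - 1) (hij : i ≠ j) :
    secondMoment k α *ᵥ uvec k i j = aaR k α • uvec k i j := by
  rw [mulVec_secondMoment hk hα1 hαk]
  funext l
  rw [uvec_sum hij]
  simp [Pi.smul_apply, smul_eq_mul]

end uv

lemma lamMin_secondMoment {k α : ℕ} (hk : 2 ≤ k) (hα1 : 1 ≤ α) (hαk : α ≤ k - 1) :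
    lamMin (secondMoment k α) = aaR k α := by
  set A := secondMoment k α with hA
  have haa := aaR_pos hk hα1 hαk
  have hi0 : (⟨0, by omega⟩ : Fin k) ≠ (⟨1, by omega⟩ : Fin k) := by
    intro h
    simpa using congrArg Fin.val h
  have hmem : aaR k α ∈ spectrum ℝ A := by
    rw [spectrum.mem_iff]
    intro hU
    have hinj := Matrix.mulVec_injective_iff_isUnit.2 hU
    have h0 : (algebraMap ℝ (Matrix (Fin k) (Fin k) ℝ) (aaR k α) - A) *ᵥ
        uvec k ⟨0, by omega⟩ ⟨1, by omega⟩
        = (algebraMap ℝ (Matrix (Fin k) (Fin k) ℝ) (aaR k α) - A) *ᵥ 0 := by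
      rw [Matrix.mulVec_zero, Matrix.sub_mulVec, Algebra.algebraMap_eq_smul_one,
        Matrix.smul_mulVec, Matrix.one_mulVec, hA, eig_uvec hk hα1 hαk hi0, sub_self]
    have hz := hinj h0
    have := congrFun hz ⟨0, by omega⟩
    simp [uvec] at this
  have hlb : ∀ μ ∈ spectrum ℝ A, aaR k α ≤ μ := by
    intro μ hμ
    by_contra hlt
    push_neg at hlt
    rw [spectrum.mem_iff] at hμ
    apply hμ
    have hq : ∀ t : Fin k → ℝ, (aaR k α - μ) * (∑ i, t i ^ 2)
        ≤ t ⬝ᵥ ((A - algebraMap ℝ (Matrix (Fin k) (Fin k) ℝ) μ) *ᵥ t) := by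
      intro t
      rw [Matrix.sub_mulVec, Algebra.algebraMap_eq_smul_one, Matrix.smul_mulVec,
        Matrix.one_mulVec, dotProduct_sub, dotProduct_smul]
      have h1 := quad_lb_s13 hk hα1 hαk t
      have h2 : t ⬝ᵥ t = ∑ i, t i ^ 2 := by
        simp [dotProduct, sq]
      rw [smul_eq_mul, h2]
      simp only [hA]
      nlinarith [h1]
    have hinj := inj_of_norm_lb (B := A - algebraMap ℝ (Matrix (Fin k) (Fin k) ℝ) μ)
      (c := aaR k α - μ) (by linarith) (norm_lb_of_quad (by linarith) hq)
    have hu := Matrix.mulVec_injective_iff_isUnit.1 hinj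
    have := hu.neg
    rwa [neg_sub] at this
  exact le_antisymm (csInf_le ⟨aaR k α, fun x hx => hlb x hx⟩ hmem) (le_csInf ⟨_, hmem⟩ hlb)

def sampMatrix {k n : ℕ} (σ : Fin n → Finset (Fin k)) : Matrix (Fin n) (Fin k) ℝ :=
  Matrix.of fun i j => if j ∈ σ i then 1 else 0

theorem stmt_13 (k α n : ℕ) (hk : 2 ≤ k) (hα1 : 1 ≤ α) (hαk : α ≤ k - 1)
    (C : ℝ) (hC : 0 < C)
    (S : Fin n → Finset (Fin k)) (hcard : ∀ i, (S i).card = α)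
    (f : Finset (Fin k) → ℝ) (hf : ∀ i, |f (S i)| ≤ C)
    (Z : Matrix (Fin k) (Fin k) ℝ) (hZ : Z = (n : ℝ)⁻¹ • ((sampMatrix S)ᵀ * sampMatrix S))
    (v : Fin k → ℝ) (hv : v = (sampMatrix S)ᵀ *ᵥ fun i => f (S i))
    (hdev : specNorm (Z - secondMoment k α) < lamMin (secondMoment k α)) :
    IsUnit Z ∧
    ∀ i j : Fin k, i ≠ j →
      |((Z⁻¹ *ᵥ ((n : ℝ)⁻¹ • v)) i - (Z⁻¹ *ᵥ ((n : ℝ)⁻¹ • v)) j) -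
          ((k : ℝ) * ((k : ℝ) - 1) / ((α : ℝ) * ((k : ℝ) - (α : ℝ)))) *
            ((v i - v j) / n)| ≤
        Real.sqrt 2 * C * (α : ℝ) * specNorm (Z - secondMoment k α) /
          (lamMin (secondMoment k α) *
            (lamMin (secondMoment k α) - specNorm (Z - secondMoment k α))) := by
  have haa := aaR_pos hk hα1 hαk
  rw [lamMin_secondMoment hk hα1 hαk] at hdev ⊢
  set ε := specNorm (Z - secondMoment k α) with hεdef
  have hε0 : 0 ≤ ε := specNorm_nonneg _
  have hgap : 0 < aaR k α - ε := by linarith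
  -- quadratic lower bound for Z
  have hquadZ : ∀ t : Fin k → ℝ, (aaR k α - ε) * (∑ i, t i ^ 2) ≤ t ⬝ᵥ (Z *ᵥ t) := by
    intro t
    have hsplit : Z *ᵥ t = secondMoment k α *ᵥ t + (Z - secondMoment k α) *ᵥ t := by
      rw [← Matrix.add_mulVec, add_sub_cancel]
    rw [hsplit, dotProduct_add]
    have h1 := quad_lb_s13 hk hα1 hαk t
    have h2 : |t ⬝ᵥ ((Z - secondMoment k α) *ᵥ t)| ≤ ε * (∑ i, t i ^ 2) := by
      calc |t ⬝ᵥ ((Z - secondMoment k α) *ᵥ t)|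
          ≤ ‖toE t‖ * ‖toE ((Z - secondMoment k α) *ᵥ t)‖ := dot_le_norms _ _
        _ ≤ ‖toE t‖ * (ε * ‖toE t‖) :=
            mul_le_mul_of_nonneg_left (norm_mulVec_le _ t) (norm_nonneg _)
        _ = ε * ‖toE t‖ ^ 2 := by ring
        _ = ε * (∑ i, t i ^ 2) := by rw [toE_normsq]
    have h3 := (abs_le.1 h2).1
    linarith
  have hZlb := norm_lb_of_quad hgap.le hquadZ
  have hZunit : IsUnit Z := Matrix.mulVec_injective_iff_isUnit.1 (inj_of_norm_lb hgap hZlb)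
  have hMlb := norm_lb_of_quad haa.le (quad_lb_s13 hk hα1 hαk)
  have hMunit : IsUnit (secondMoment k α) :=
    Matrix.mulVec_injective_iff_isUnit.1 (inj_of_norm_lb haa hMlb)
  have hZdet := Z.isUnit_iff_isUnit_det.1 hZunit
  have hMdet := (secondMoment k α).isUnit_iff_isUnit_det.1 hMunit
  refine ⟨hZunit, ?_⟩
  intro i j hij
  set w : Fin k → ℝ := (n : ℝ)⁻¹ • v with hw
  set y : Fin k → ℝ := (secondMoment k α)⁻¹ *ᵥ w with hy
  set x : Fin k → ℝ := Z⁻¹ *ᵥ w with hx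
  -- bound on ‖w‖
  have hvsum : v = ∑ i0 : Fin n, f (S i0) • charVec k (S i0) := by
    rw [hv]; funext j0
    simp only [Matrix.mulVec, dotProduct, Matrix.transpose_apply, sampMatrix,
      Matrix.of_apply, Finset.sum_apply, Pi.smul_apply, smul_eq_mul, charVec]
    exact Finset.sum_congr rfl fun i0 _ => by by_cases h : j0 ∈ S i0 <;> simp [h]
  have hnormv : ‖toE v‖ ≤ (n : ℝ) * (C * α) := by
    rw [hvsum, map_sum]
    calc ‖∑ i0 : Fin n, toE (f (S i0) • charVec k (S i0))‖
        ≤ ∑ i0 : Fin n, ‖toE (f (S i0) • charVec k (S i0))‖ := norm_sum_le _ _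
      _ ≤ ∑ _i0 : Fin n, C * (α : ℝ) := by
          apply Finset.sum_le_sum
          intro i0 _
          rw [_root_.map_smul, norm_smul, Real.norm_eq_abs]
          have h1 : ‖toE (charVec k (S i0))‖ = Real.sqrt α := by
            rw [toE_norm]
            congr 1
            have hpt : ∀ j0, (charVec k (S i0) j0) ^ 2
                = if j0 ∈ S i0 then (1:ℝ) else 0 := by
              intro j0; unfold charVec; by_cases h : j0 ∈ S i0 <;> simp [h]
            rw [Finset.sum_congr rfl fun j0 _ => hpt j0, Finset.sum_boole]
            rw [Finset.filter_univ_mem, hcard i0]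
          rw [h1]
          have hα0 : (0:ℝ) ≤ (α : ℝ) := Nat.cast_nonneg α
          have hα1R : (1:ℝ) ≤ (α : ℝ) := by exact_mod_cast hα1
          have h2 : Real.sqrt α ≤ (α : ℝ) := by
            nlinarith [Real.sq_sqrt hα0, Real.sqrt_nonneg ((α:ℝ)),
              mul_self_nonneg (Real.sqrt ((α:ℝ)) - 1)]
          exact mul_le_mul (hf i0) h2 (Real.sqrt_nonneg _) hC.le
      _ = (n : ℝ) * (C * α) := by
          rw [Finset.sum_const, Finset.card_univ, Fintype.card_fin, nsmul_eq_mul]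
  have hnormw : ‖toE w‖ ≤ C * α := by
    have hCα : (0:ℝ) ≤ C * α := by positivity
    rw [hw, _root_.map_smul, norm_smul, Real.norm_eq_abs, abs_inv, Nat.abs_cast]
    rcases Nat.eq_zero_or_pos n with hn | hn
    · subst hn; simpa using hCα
    · have hn0 : (0:ℝ) < n := by exact_mod_cast hn
      calc ((n:ℝ))⁻¹ * ‖toE v‖ ≤ ((n:ℝ))⁻¹ * ((n:ℝ) * (C * α)) :=
            mul_le_mul_of_nonneg_left hnormv (inv_nonneg.2 hn0.le)
        _ = C * α := by field_simp
  -- inverse bounds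
  have hZinvle := inv_norm_le hgap hZunit hZlb
  have hMinvle := inv_norm_le haa hMunit hMlb
  -- the key identity
  have hMy : secondMoment k α *ᵥ y = w := by
    rw [hy, Matrix.mulVec_mulVec, Matrix.mul_nonsing_inv _ hMdet, Matrix.one_mulVec]
  have hZg : Z *ᵥ (x - y) = -((Z - secondMoment k α) *ᵥ y) := by
    rw [Matrix.mulVec_sub, hx, Matrix.mulVec_mulVec, Matrix.mul_nonsing_inv Z hZdet,
      Matrix.one_mulVec, Matrix.sub_mulVec, neg_sub, hMy]
  have hg : x - y = -(Z⁻¹ *ᵥ ((Z - secondMoment k α) *ᵥ y)) := by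
    have h := congrArg (fun z => Z⁻¹ *ᵥ z) hZg
    simp only [Matrix.mulVec_mulVec] at h
    rw [Matrix.nonsing_inv_mul Z hZdet, Matrix.one_mulVec] at h
    rw [h, Matrix.mulVec_neg, Matrix.mulVec_mulVec]
  have hgnorm : ‖toE (x - y)‖ ≤ (aaR k α - ε)⁻¹ * (ε * ((aaR k α)⁻¹ * (C * α))) := by
    rw [hg, map_neg, norm_neg]
    calc ‖toE (Z⁻¹ *ᵥ ((Z - secondMoment k α) *ᵥ y))‖
        ≤ (aaR k α - ε)⁻¹ * ‖toE ((Z - secondMoment k α) *ᵥ y)‖ := hZinvle _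
      _ ≤ (aaR k α - ε)⁻¹ * (ε * ‖toE y‖) :=
          mul_le_mul_of_nonneg_left (norm_mulVec_le _ y) (inv_nonneg.2 hgap.le)
      _ ≤ (aaR k α - ε)⁻¹ * (ε * ((aaR k α)⁻¹ * ‖toE w‖)) := by
          apply mul_le_mul_of_nonneg_left _ (inv_nonneg.2 hgap.le)
          exact mul_le_mul_of_nonneg_left (hMinvle w) hε0
      _ ≤ (aaR k α - ε)⁻¹ * (ε * ((aaR k α)⁻¹ * (C * α))) := by
          apply mul_le_mul_of_nonneg_left _ (inv_nonneg.2 hgap.le)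
          apply mul_le_mul_of_nonneg_left _ hε0
          exact mul_le_mul_of_nonneg_left hnormw (inv_nonneg.2 haa.le)
  -- dot product identities
  have hMinvu : (secondMoment k α)⁻¹ *ᵥ uvec k i j = (aaR k α)⁻¹ • uvec k i j := by
    have h1 := eig_uvec (i := i) (j := j) hk hα1 hαk hij
    have h := congrArg (fun z => (secondMoment k α)⁻¹ *ᵥ z) h1
    simp only [Matrix.mulVec_mulVec] at h
    rw [Matrix.nonsing_inv_mul _ hMdet, Matrix.one_mulVec, Matrix.mulVec_smul] at h
    calc (secondMoment k α)⁻¹ *ᵥ uvec k i j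
        = (aaR k α)⁻¹ • (aaR k α • ((secondMoment k α)⁻¹ *ᵥ uvec k i j)) := by
          rw [smul_smul, inv_mul_cancel₀ haa.ne', one_smul]
      _ = (aaR k α)⁻¹ • uvec k i j := by rw [← h]
  have hdy : uvec k i j ⬝ᵥ y = (aaR k α)⁻¹ * (w i - w j) := by
    rw [hy, Matrix.dotProduct_mulVec]
    have hvm : uvec k i j ᵥ* (secondMoment k α)⁻¹
        = (secondMoment k α)⁻¹ *ᵥ uvec k i j := by
      conv_lhs => rw [show (secondMoment k α)⁻¹ = ((secondMoment k α)⁻¹ᵀ)ᵀ by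
        rw [Matrix.transpose_transpose]]
      rw [Matrix.vecMul_transpose, Matrix.transpose_nonsing_inv,
        secondMoment_symm hk hα1 hαk]
    rw [hvm, hMinvu, smul_dotProduct, uvec_dot hij w, smul_eq_mul]
  have hdx : uvec k i j ⬝ᵥ x = x i - x j := uvec_dot hij x
  have hudot : uvec k i j ⬝ᵥ (x - y) = (x i - x j) - (aaR k α)⁻¹ * (w i - w j) := by
    rw [dotProduct_sub, hdx, hdy]
  -- identify the LHS
  have hcoef : ((k : ℝ) * ((k : ℝ) - 1) / ((α : ℝ) * ((k : ℝ) - (α : ℝ)))) = (aaR k α)⁻¹ := by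
    unfold aaR; rw [inv_div]
  have hwv : (aaR k α)⁻¹ * (w i - w j)
      = ((k : ℝ) * ((k : ℝ) - 1) / ((α : ℝ) * ((k : ℝ) - (α : ℝ)))) * ((v i - v j) / n) := by
    rw [hcoef, hw]
    simp only [Pi.smul_apply, smul_eq_mul]
    ring
  rw [← hwv, ← hudot]
  -- final bound
  calc |uvec k i j ⬝ᵥ (x - y)| ≤ ‖toE (uvec k i j)‖ * ‖toE (x - y)‖ := dot_le_norms _ _
    _ = Real.sqrt 2 * ‖toE (x - y)‖ := by rw [uvec_norm hij]
    _ ≤ Real.sqrt 2 * ((aaR k α - ε)⁻¹ * (ε * ((aaR k α)⁻¹ * (C * α)))) :=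
        mul_le_mul_of_nonneg_left hgnorm (Real.sqrt_nonneg 2)
    _ = Real.sqrt 2 * C * (α : ℝ) * ε / (aaR k α * (aaR k α - ε)) := by
        rw [div_eq_mul_inv, mul_inv]
        ring
end
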